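/- Let A be the n×n tridiagonal matrix with diagonal entries α except A_{11} = α+γ and A_{nn} = α+β, superdiagonal entries β, and subdiagonal entries γ. Then the eigenvalues of A are λ_k = α + 2√(βγ)·cos(kπ/n) for k = 1,…,n−1, together with λ_n = α + β + γ. -/

import Mathlib

open Matrix

/-- The `n × n` tridiagonal matrix with diagonal `α` except the `(1,1)` entry `α + γ`
and the `(n,n)` entry `α + β`, superdiagonal `β`, subdiagonal `γ`. -/
def triRefl (n : ℕ) (α β γ : ℂ) : Matrix (Fin n) (Fin n) ℂ :=
  Matrix.of fun i j =>
    if (i : ℕ) = (j : ℕ) then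
      α + (if (i : ℕ) = 0 then γ else 0) + (if (i : ℕ) = n - 1 then β else 0)
    else if (i : ℕ) + 1 = (j : ℕ) then β
    else if (j : ℕ) + 1 = (i : ℕ) then γ
    else 0

noncomputable def extSeq (n : ℕ) (v : Fin n → ℂ) : ℕ → ℂ := fun j =>
  if h : j - 1 < n then v ⟨j - 1, h⟩ else if h2 : 0 < n then v ⟨n - 1, Nat.sub_lt h2 one_pos⟩ else 0

lemma extSeq_of_lt (n : ℕ) (v : Fin n → ℂ) (j : ℕ) (h : j - 1 < n) :
    extSeq n v j = v ⟨j - 1, h⟩ := by simp [extSeq, h]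

lemma sum_ind (n : ℕ) (m : ℕ) (c : ℂ) (v : Fin n → ℂ) :
    (∑ j : Fin n, (if (j : ℕ) = m then c else 0) * v j)
      = if h : m < n then c * v ⟨m, h⟩ else 0 := by
  split_ifs with h
  · rw [Finset.sum_eq_single (⟨m, h⟩ : Fin n)]
    · simp
    · intro b _ hb
      simp only [ite_mul, zero_mul, ite_eq_right_iff]
      intro hbm
      exact absurd (Fin.ext hbm : b = ⟨m, h⟩) hb
    · simp
  · apply Finset.sum_eq_zero
    intro j _
    have : (j : ℕ) ≠ m := fun hj => h (hj ▸ j.isLt)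
    simp [this]

lemma triRefl_apply (n : ℕ) (α β γ : ℂ) (i j : Fin n) :
    triRefl n α β γ i j =
      (if (j : ℕ) = (i : ℕ) then
          α + (if (i : ℕ) = 0 then γ else 0) + (if (i : ℕ) = n - 1 then β else 0) else 0)
      + (if (j : ℕ) = (i : ℕ) + 1 then β else 0)
      + (if (j : ℕ) + 1 = (i : ℕ) then γ else 0) := by
  simp only [triRefl, Matrix.of_apply]
  split_ifs <;> (first | ring1 | (exfalso; omega))

lemma mulVec_triRefl (n : ℕ) (hn : 2 ≤ n) (α β γ : ℂ) (v : Fin n → ℂ) (i : Fin n) :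
    (triRefl n α β γ).mulVec v i
      = γ * extSeq n v i + α * extSeq n v ((i : ℕ) + 1) + β * extSeq n v ((i : ℕ) + 2) := by
  have hi := i.isLt
  have e1 : extSeq n v ((i:ℕ) + 1) = v i := by
    rw [extSeq_of_lt n v _ (by simp [hi])]
    exact congr_arg v (Fin.ext (by simp))
  have expand : (triRefl n α β γ).mulVec v i
      = (∑ j : Fin n, (if (j:ℕ) = (i:ℕ) then
            (α + (if (i:ℕ) = 0 then γ else 0) + (if (i:ℕ) = n-1 then β else 0)) else 0) * v j)
      + (∑ j : Fin n, (if (j:ℕ) = (i:ℕ)+1 then β else 0) * v j)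
      + (∑ j : Fin n, (if (j:ℕ)+1 = (i:ℕ) then γ else 0) * v j) := by
    rw [show (triRefl n α β γ).mulVec v i = ∑ j, triRefl n α β γ i j * v j from rfl]
    rw [← Finset.sum_add_distrib, ← Finset.sum_add_distrib]
    exact Finset.sum_congr rfl fun j _ => by rw [triRefl_apply]; ring
  rw [expand, sum_ind, sum_ind, dif_pos hi]
  rcases Nat.eq_zero_or_pos (i:ℕ) with h0 | h0
  · have h3 : (∑ j : Fin n, (if (j:ℕ)+1 = (i:ℕ) then γ else 0) * v j) = 0 := by
      apply Finset.sum_eq_zero; intro j _; rw [if_neg (by omega), zero_mul]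
    rw [h3]
    have ew : extSeq n v (i:ℕ) = v i := by
      rw [extSeq_of_lt n v _ (by omega)]
      congr 1; exact Fin.ext (by simp [h0])
    have hne : (i:ℕ) ≠ n - 1 := by omega
    rcases Nat.lt_or_ge ((i:ℕ)+1) n with h2 | h2
    · rw [dif_pos h2]
      have e2 : extSeq n v ((i:ℕ) + 2) = v ⟨(i:ℕ)+1, h2⟩ := by
        rw [extSeq_of_lt n v _ (by omega)]
        exact congr_arg v (Fin.ext (by simp))
      rw [e1, e2, ew, if_pos h0, if_neg hne]
      ring
    · omega
  · have h3 : (∑ j : Fin n, (if (j:ℕ)+1 = (i:ℕ) then γ else 0) * v j)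
        = ∑ j : Fin n, (if (j:ℕ) = (i:ℕ)-1 then γ else 0) * v j :=
      Finset.sum_congr rfl fun j _ => by congr 1; exact if_congr (by omega) rfl rfl
    rw [h3, sum_ind, dif_pos (show (i:ℕ)-1 < n by omega)]
    have ew : extSeq n v (i:ℕ) = v ⟨(i:ℕ)-1, by omega⟩ := extSeq_of_lt n v _ (by omega)
    have hne0 : (i:ℕ) ≠ 0 := by omega
    rcases Nat.lt_or_ge ((i:ℕ)+1) n with h2 | h2
    · rw [dif_pos h2]
      have e2 : extSeq n v ((i:ℕ) + 2) = v ⟨(i:ℕ)+1, h2⟩ := by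
        rw [extSeq_of_lt n v _ (by omega)]
        exact congr_arg v (Fin.ext (by simp))
      have hne : (i:ℕ) ≠ n - 1 := by omega
      rw [e1, e2, ew, if_neg hne0, if_neg hne]
      ring
    · have hlast : (i:ℕ) = n - 1 := by omega
      rw [dif_neg (by omega)]
      have e2 : extSeq n v ((i:ℕ) + 2) = v ⟨n-1, by omega⟩ := by
        simp only [extSeq]
        rw [dif_neg (by omega), dif_pos (by omega)]
      rw [e1, e2, ew, if_neg hne0, if_pos hlast]
      have : (⟨n-1, by omega⟩ : Fin n) = i := Fin.ext (by simp [hlast])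
      rw [this]
      ring

theorem mem_spec_iff (n : ℕ) (M : Matrix (Fin n) (Fin n) ℂ) (μ : ℂ) :
    μ ∈ spectrum ℂ M ↔ ∃ v, v ≠ 0 ∧ M.mulVec v = μ • v := by
  rw [spectrum.mem_iff, Matrix.isUnit_iff_isUnit_det, isUnit_iff_ne_zero]
  simp only [not_not]
  rw [← Matrix.exists_mulVec_eq_zero_iff]
  have key : ∀ v : Fin n → ℂ,
      (algebraMap ℂ (Matrix (Fin n) (Fin n) ℂ) μ - M).mulVec v = μ • v - M.mulVec v := by
    intro v
    rw [Matrix.sub_mulVec, Algebra.algebraMap_eq_smul_one, Matrix.smul_mulVec,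
      Matrix.one_mulVec]
  constructor
  · rintro ⟨v, hv, h⟩
    exact ⟨v, hv, by rw [key v, sub_eq_zero] at h; exact h.symm⟩
  · rintro ⟨v, hv, h⟩
    exact ⟨v, hv, by rw [key v, sub_eq_zero, h]⟩
lemma seq_unique (n : ℕ) (α β γ μ : ℂ) (hb : β ≠ 0) (w f : ℕ → ℂ)
    (hw : ∀ j < n, γ * w j + α * w (j+1) + β * w (j+2) = μ * w (j+1))
    (hf : ∀ j < n, γ * f j + α * f (j+1) + β * f (j+2) = μ * f (j+1))
    (h0 : w 0 = f 0) (h1 : w 1 = f 1) : ∀ j, j ≤ n + 1 → w j = f j := by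
  intro j
  induction j using Nat.strong_induction_on with
  | _ j ih =>
    intro hj
    match j, hj with
    | 0, _ => exact h0
    | 1, _ => exact h1
    | (m+2), hj =>
      have hm : m < n := by omega
      have e1 := hw m hm
      have e2 := hf m hm
      have a1 : w m = f m := ih m (by omega) (by omega)
      have a2 : w (m+1) = f (m+1) := ih (m+1) (by omega) (by omega)
      exact mul_left_cancel₀ hb (by linear_combination e1 - e2 - γ * a1 + (μ - α) * a2)

lemma two_pow_rec (α β γ μ a b A B : ℂ)
    (h1 : β*a^2 - (μ-α)*a + γ = 0) (h2 : β*b^2 - (μ-α)*b + γ = 0) (j : ℕ) :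
    γ*(A*a^j + B*b^j) + α*(A*a^(j+1) + B*b^(j+1)) + β*(A*a^(j+2) + B*b^(j+2))
      = μ*(A*a^(j+1) + B*b^(j+1)) := by
  simp only [pow_succ]
  linear_combination (A*a^j)*h1 + (B*b^j)*h2

lemma double_pow_rec (α β γ μ w A B : ℂ)
    (h1 : β*w^2 - (μ-α)*w + γ = 0) (h2 : 2*β*w - (μ-α) = 0) (j : ℕ) :
    γ*((A+B*j)*w^j) + α*((A+B*(j+1))*w^(j+1)) + β*((A+B*(j+2))*w^(j+2))
      = μ*((A+B*(j+1))*w^(j+1)) := by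
  simp only [pow_succ]
  push_cast
  linear_combination ((A+B*j)*w^j)*h1 + (B*w^j*w)*h2

lemma eigen_of_seq (n : ℕ) (hn : 2 ≤ n) (α β γ μ : ℂ) (f : ℕ → ℂ)
    (hrec : ∀ j < n, γ * f j + α * f (j+1) + β * f (j+2) = μ * f (j+1))
    (hb0 : f 0 = f 1) (hb1 : f (n+1) = f n)
    (hnz : ∃ j, 1 ≤ j ∧ j ≤ n ∧ f j ≠ 0) :
    μ ∈ spectrum ℂ (triRefl n α β γ) := by
  set v : Fin n → ℂ := fun i => f ((i : ℕ) + 1) with hv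
  have hW : ∀ j, j ≤ n + 1 → extSeq n v j = f j := by
    intro j hj
    rcases Nat.eq_zero_or_pos j with rfl | hj1
    · rw [extSeq_of_lt n v 0 (by omega)]
      show f _ = f 0
      rw [hb0]
    rcases Nat.lt_or_ge j (n+1) with hj2 | hj2
    · rw [extSeq_of_lt n v j (by omega)]
      show f (j - 1 + 1) = f j
      congr 1; omega
    · have hj3 : j = n + 1 := by omega
      subst hj3
      have : extSeq n v (n+1) = v ⟨n-1, by omega⟩ := by
        simp only [extSeq]
        rw [dif_neg (by omega), dif_pos (by omega)]
      rw [this, hb1]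
      show f (n - 1 + 1) = f n
      congr 1; omega
  rw [mem_spec_iff]
  refine ⟨v, ?_, ?_⟩
  · obtain ⟨j, hj1, hj2, hj3⟩ := hnz
    intro h0
    apply hj3
    have : v ⟨j - 1, by omega⟩ = 0 := by rw [h0]; rfl
    rw [hv] at this
    simpa [show j - 1 + 1 = j by omega] using this
  · funext i
    rw [mulVec_triRefl n hn α β γ v i]
    have hi := i.isLt
    rw [hW i (by omega), hW ((i:ℕ)+1) (by omega), hW ((i:ℕ)+2) (by omega)]
    rw [hrec (i:ℕ) hi]
    simp [hv]

lemma seq_of_eigen (n : ℕ) (hn : 2 ≤ n) (α β γ μ : ℂ)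
    (h : μ ∈ spectrum ℂ (triRefl n α β γ)) :
    ∃ w : ℕ → ℂ, (∀ j < n, γ * w j + α * w (j+1) + β * w (j+2) = μ * w (j+1))
      ∧ w 0 = w 1 ∧ w (n+1) = w n ∧ ∃ j, 1 ≤ j ∧ j ≤ n ∧ w j ≠ 0 := by
  rw [mem_spec_iff] at h
  obtain ⟨v, hv, heig⟩ := h
  refine ⟨extSeq n v, ?_, ?_, ?_, ?_⟩
  · intro j hj
    have h0 := congr_fun heig ⟨j, hj⟩
    rw [mulVec_triRefl n hn α β γ v ⟨j, hj⟩] at h0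
    simp only [Fin.val_mk] at h0
    have hW : extSeq n v (j+1) = v ⟨j, hj⟩ := by
      rw [extSeq_of_lt n v (j+1) (by omega)]
      exact congr_arg v (Fin.ext (by simp))
    rw [h0, hW]
    simp
  · rw [extSeq_of_lt n v 0 (by omega), extSeq_of_lt n v 1 (by omega)]
  · have h1 : extSeq n v (n+1) = v ⟨n-1, by omega⟩ := by
      simp only [extSeq]
      rw [dif_neg (by omega), dif_pos (by omega)]
    have h2 : extSeq n v n = v ⟨n-1, by omega⟩ :=
      extSeq_of_lt n v n (by omega)
    rw [h1, h2]
  · have : ∃ i : Fin n, v i ≠ 0 := by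
      by_contra hc
      push_neg at hc
      exact hv (funext fun i => hc i)
    obtain ⟨i, hi⟩ := this
    refine ⟨(i:ℕ)+1, by omega, by omega, ?_⟩
    rw [extSeq_of_lt n v ((i:ℕ)+1) (by simp [i.isLt])]
    have heq : (⟨(i:ℕ)+1-1, by simp [i.isLt]⟩ : Fin n) = i := Fin.ext (by simp)
    rw [heq]
    exact hi

lemma root_quad (β γ s z zi : ℂ) (hb : β ≠ 0) (hzz : z * zi = 1) (hs : s^2 = β*γ) :
    β*((s/β)*z)^2 - (s*(z+zi))*((s/β)*z) + γ = 0 := by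
  have h : β*((s/β)*z)^2 - (s*(z+zi))*((s/β)*z) + γ
      = (s^2*z^2 - s^2*(z+zi)*z + γ*β)/β := by field_simp
  rw [h, div_eq_zero_iff]
  left
  linear_combination (-(z*zi))*hs - β*γ*hzz

lemma spec_of_z (n : ℕ) (hn : 2 ≤ n) (α β γ s z : ℂ) (hb : β ≠ 0) (hs : s^2 = β*γ)
    (hsz : s ≠ 0) (hz : z ≠ 0) (hz2 : z^2 ≠ 1) (hzn : z^n * z^n = 1) :
    (α + s*(z+z⁻¹)) ∈ spectrum ℂ (triRefl n α β γ) := by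
  have hzz : z * z⁻¹ = 1 := mul_inv_cancel₀ hz
  have hzi : z⁻¹ ≠ 0 := inv_ne_zero hz
  set t := s/β with htdef
  have ht : t ≠ 0 := div_ne_zero hsz hb
  set a := t*z with hadef
  set b := t*z⁻¹ with hbdef
  have hab : a ≠ b := by
    intro h
    apply hz2
    have h2 : z = z⁻¹ := mul_left_cancel₀ ht h
    rw [sq]
    nth_rewrite 2 [h2]
    exact hzz
  have hμα : (α + s*(z+z⁻¹)) - α = s*(z+z⁻¹) := by ring
  have h1 : β*a^2 - ((α + s*(z+z⁻¹))-α)*a + γ = 0 := by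
    rw [hμα]; exact root_quad β γ s z z⁻¹ hb hzz hs
  have h2 : β*b^2 - ((α + s*(z+z⁻¹))-α)*b + γ = 0 := by
    rw [hμα, show s*(z+z⁻¹) = s*(z⁻¹+z) by ring]
    exact root_quad β γ s z⁻¹ z hb (by rw [mul_comm]; exact hzz) hs
  have han : a^n = b^n := by
    have hzn2 : (z⁻¹)^n = z^n := by
      rw [inv_pow]
      exact (eq_inv_of_mul_eq_one_left hzn).symm
    rw [hadef, hbdef, mul_pow, mul_pow, hzn2]
  apply eigen_of_seq n hn α β γ _ (fun j => (1-b)*a^j + (a-1)*b^j)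
  · intro j hj
    exact two_pow_rec α β γ _ a b (1-b) (a-1) h1 h2 j
  · show (1-b)*a^0 + (a-1)*b^0 = (1-b)*a^1 + (a-1)*b^1
    simp only [pow_zero, pow_one]
    ring
  · show (1-b)*a^(n+1) + (a-1)*b^(n+1) = (1-b)*a^n + (a-1)*b^n
    simp only [pow_succ]
    linear_combination ((a-1)*(1-b))*han
  · have hbne : b ≠ 0 := mul_ne_zero ht hzi
    by_cases hf1 : (1-b)*a^1 + (a-1)*b^1 = 0
    · refine ⟨2, by omega, by omega, ?_⟩
      intro hf2
      have hf2' : (1-b)*a^2 + (a-1)*b^2 = 0 := hf2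
      simp only [pow_one] at hf1
      have key : (a-1)*b*(a-b) = 0 := by
        simp only [pow_succ, pow_zero, pow_one] at hf2'
        linear_combination a*hf1 - hf2'
      have ha1 : a = 1 := by
        rcases mul_eq_zero.mp key with h | h
        · rcases mul_eq_zero.mp h with h' | h'
          · exact sub_eq_zero.mp h'
          · exact absurd h' hbne
        · exact absurd (sub_eq_zero.mp h) hab
      rw [ha1] at hf1
      have hb1 : b = 1 := by
        have : 1 - b = 0 := by linear_combination hf1
        linear_combination -this
      exact hab (by rw [ha1, hb1])
    · exact ⟨1, le_refl 1, by omega, hf1⟩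

open Complex in
lemma backward_cos (n : ℕ) (hn : 2 ≤ n) (α β γ s : ℂ) (hs : s^2 = β*γ) (hsz : s ≠ 0)
    (k : ℕ) (hk1 : 1 ≤ k) (hk2 : k ≤ n - 1) :
    (α + 2*s*Complex.cos ((k:ℂ) * (Real.pi:ℂ) / n)) ∈ spectrum ℂ (triRefl n α β γ) := by
  have hb : β ≠ 0 := by
    intro h
    exact hsz (pow_eq_zero_iff (n := 2) (by norm_num) |>.mp (by rw [hs, h, zero_mul]))
  set θ : ℂ := (k:ℂ) * (Real.pi:ℂ) / n with hθ
  set z := Complex.exp (θ*Complex.I) with hzdef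
  have hzne : z ≠ 0 := Complex.exp_ne_zero _
  have hn0 : (n:ℂ) ≠ 0 := Nat.cast_ne_zero.mpr (by omega)
  have hπ : (Real.pi:ℂ) ≠ 0 := Complex.ofReal_ne_zero.mpr Real.pi_ne_zero
  have hcos : 2 * Complex.cos θ = z + z⁻¹ := by
    rw [hzdef, ← Complex.exp_neg]
    simp only [Complex.cos, neg_mul]
    ring
  have hzn : z^n * z^n = 1 := by
    rw [hzdef, ← Complex.exp_nat_mul, ← Complex.exp_add]
    have harg : (n:ℂ)*(θ*I) + (n:ℂ)*(θ*I) = (k:ℕ)*(2*Real.pi*I) := by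
      rw [hθ]; field_simp; ring
    rw [harg, Complex.exp_nat_mul, Complex.exp_two_pi_mul_I, one_pow]
  have hz2 : z^2 ≠ 1 := by
    intro h
    have h' : Complex.exp ((θ*I) + (θ*I)) = 1 := by
      rw [Complex.exp_add, ← hzdef, ← sq]; exact h
    rw [Complex.exp_eq_one_iff] at h'
    obtain ⟨m, hm⟩ := h'
    rw [hθ] at hm
    have hkmn : (k:ℂ) = (m:ℂ)*(n:ℂ) := by
      field_simp at hm
      have h2 : ((k:ℂ) - m*n) * (Real.pi * I * 2) = 0 := by linear_combination ((Real.pi:ℂ) * I) * hm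
      rcases mul_eq_zero.mp h2 with h3 | h3
      · linear_combination h3
      · exfalso
        have : (Real.pi:ℂ) * I * 2 ≠ 0 :=
          mul_ne_zero (mul_ne_zero hπ Complex.I_ne_zero) two_ne_zero
        exact this h3
    have hkz : (k:ℤ) = m*(n:ℤ) := by exact_mod_cast hkmn
    have hk1' : (1:ℤ) ≤ (k:ℤ) := by exact_mod_cast hk1
    have hk2' : (k:ℤ) < (n:ℤ) := by exact_mod_cast (show k < n by omega)
    have hn' : (2:ℤ) ≤ (n:ℤ) := by exact_mod_cast hn
    rcases le_or_gt m 0 with hm0 | hm0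
    · nlinarith
    · have hm1 : (1:ℤ) ≤ m := hm0
      nlinarith
  have hfinal : α + 2*s*Complex.cos θ = α + s*(z+z⁻¹) := by
    rw [← hcos]; ring
  rw [hfinal]
  exact spec_of_z n hn α β γ s z hb hs hsz hzne hz2 hzn

lemma spec_abc (n : ℕ) (hn : 2 ≤ n) (α β γ : ℂ) :
    (α + β + γ) ∈ spectrum ℂ (triRefl n α β γ) := by
  apply eigen_of_seq n hn α β γ _ (fun _ => 1)
  · intro j hj; ring
  · rfl
  · rfl
  · exact ⟨1, le_refl 1, by omega, one_ne_zero⟩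

lemma spec_alpha_gamma0 (n : ℕ) (hn : 2 ≤ n) (α β : ℂ) :
    α ∈ spectrum ℂ (triRefl n α β 0) := by
  apply eigen_of_seq n hn α β 0 _ (fun j => if j ≤ 1 then 1 else 0)
  · intro j hj
    rcases Nat.eq_zero_or_pos j with rfl | hj1
    · norm_num
    · simp only [show ¬(j + 1 ≤ 1) by omega, show ¬(j + 2 ≤ 1) by omega, if_neg, if_false]
      ring
  · rfl
  · simp only [show ¬(n + 1 ≤ 1) by omega, show ¬(n ≤ 1) by omega, if_neg, if_false]
  · exact ⟨1, le_refl 1, by omega, by norm_num⟩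

lemma spec_alpha_beta0 (n : ℕ) (hn : 2 ≤ n) (α γ : ℂ) :
    α ∈ spectrum ℂ (triRefl n α 0 γ) := by
  apply eigen_of_seq n hn α 0 γ _ (fun j => if n ≤ j then 1 else 0)
  · intro j hj
    simp only [show ¬(n ≤ j) by omega]
    norm_num
  · simp only [show ¬(n ≤ 0) by omega, show ¬(n ≤ 1) by omega, if_neg, if_false]
  · simp only [show n ≤ n+1 by omega, show n ≤ n by omega, if_pos]
  · exact ⟨n, by omega, le_refl n, by simp⟩

lemma forward_gamma0 (n : ℕ) (hn : 2 ≤ n) (α β μ : ℂ)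
    (hspec : μ ∈ spectrum ℂ (triRefl n α β 0)) : μ = α + β ∨ μ = α := by
  by_contra hcon
  push_neg at hcon
  obtain ⟨h1, h2⟩ := hcon
  obtain ⟨w, hrec, hb0, hb1, j0, hj1, hj2, hj3⟩ := seq_of_eigen n hn α β 0 μ hspec
  have claim : ∀ m, m ≤ n - 1 → w (n - m) = 0 := by
    intro m
    induction m with
    | zero =>
      intro _
      have hr := hrec (n-1) (by omega)
      rw [show n-1+1 = n by omega, show n-1+2 = n+1 by omega, hb1] at hr
      have : (α + β - μ) * w n = 0 := by linear_combination hr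
      rcases mul_eq_zero.mp this with h | h
      · exact absurd (by linear_combination -h) h1
      · simpa using h
    | succ m ih =>
      intro hm
      have hwm : w (n - m) = 0 := ih (by omega)
      have hr := hrec (n-m-2) (by omega)
      rw [show n-m-2+1 = n-(m+1) by omega, show n-m-2+2 = n-m by omega, hwm] at hr
      have : (μ - α) * w (n - (m+1)) = 0 := by linear_combination -hr
      rcases mul_eq_zero.mp this with h | h
      · exact absurd (by linear_combination h) h2
      · exact h
  have := claim (n - j0) (by omega)
  rw [show n - (n - j0) = j0 by omega] at this
  exact hj3 this

lemma forward_beta0 (n : ℕ) (hn : 2 ≤ n) (α γ μ : ℂ)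
    (hspec : μ ∈ spectrum ℂ (triRefl n α 0 γ)) : μ = α + γ ∨ μ = α := by
  by_contra hcon
  push_neg at hcon
  obtain ⟨h1, h2⟩ := hcon
  obtain ⟨w, hrec, hb0, hb1, j0, hj1, hj2, hj3⟩ := seq_of_eigen n hn α 0 γ μ hspec
  have claim : ∀ j, 1 ≤ j → j ≤ n → w j = 0 := by
    intro j
    induction j using Nat.strong_induction_on with
    | _ j ih =>
      intro hj1' hj2'
      match j, hj1' with
      | 1, _ =>
        have hr := hrec 0 (by omega)
        rw [hb0] at hr
        have : (α + γ - μ) * w 1 = 0 := by linear_combination hr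
        rcases mul_eq_zero.mp this with h | h
        · exact absurd (by linear_combination -h) h1
        · exact h
      | (m+2), _ =>
        have hwm : w (m+1) = 0 := ih (m+1) (by omega) (by omega) (by omega)
        have hr := hrec (m+1) (by omega)
        rw [hwm] at hr
        have : (μ - α) * w (m+2) = 0 := by linear_combination -hr
        rcases mul_eq_zero.mp this with h | h
        · exact absurd (by linear_combination h) h2
        · exact h
  exact hj3 (claim j0 hj1 hj2)

open Complex in
lemma forward_main (n : ℕ) (hn : 2 ≤ n) (α β γ s μ : ℂ) (hs : s^2 = β*γ)
    (hb : β ≠ 0) (hg : γ ≠ 0)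
    (hspec : μ ∈ spectrum ℂ (triRefl n α β γ)) :
    μ = α + β + γ ∨ ∃ k : ℕ, 1 ≤ k ∧ k ≤ n - 1 ∧
      μ = α + 2*s*Complex.cos ((k:ℂ) * (Real.pi:ℂ) / n) := by
  obtain ⟨w, hrec, hbnd0, hbnd1, j0, hj01, hj02, hj03⟩ := seq_of_eigen n hn α β γ μ hspec
  have hsz : s ≠ 0 := by
    intro h
    rw [h] at hs
    have : β*γ = 0 := by rw [← hs]; norm_num
    rcases mul_eq_zero.mp this with h' | h'
    · exact hb h'
    · exact hg h'
  set t := s/β with htdef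
  have ht : t ≠ 0 := div_ne_zero hsz hb
  obtain ⟨θ, hθ⟩ := Complex.cos_surjective ((μ - α)/(2*s))
  set z := Complex.exp (θ*Complex.I) with hzdef
  have hzne : z ≠ 0 := Complex.exp_ne_zero _
  have hzz : z * z⁻¹ = 1 := mul_inv_cancel₀ hzne
  have hcos : 2 * Complex.cos θ = z + z⁻¹ := by
    rw [hzdef, ← Complex.exp_neg]
    simp only [Complex.cos, neg_mul]
    ring
  have hμcos : 2*s*Complex.cos θ = μ - α := by rw [hθ]; field_simp
  have hμ : μ = α + s*(z+z⁻¹) := by linear_combination s*hcos - hμcos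
  have hn0 : (n:ℂ) ≠ 0 := Nat.cast_ne_zero.mpr (by omega)
  have hπ : (Real.pi:ℂ) ≠ 0 := Complex.ofReal_ne_zero.mpr Real.pi_ne_zero
  by_cases hz2 : z^2 = 1
  · -- repeated root case : z = z⁻¹
    have hzi : z⁻¹ = z := inv_eq_of_mul_eq_one_right (by rw [← sq]; exact hz2)
    have hzt : z*t ≠ 0 := mul_ne_zero hzne ht
    have hμα : μ - α = 2*s*z := by rw [hμ, hzi]; ring
    have h1 : β*(z*t)^2 - (μ-α)*(z*t) + γ = 0 := by
      rw [hμα, htdef]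
      have expand : β*(z*(s/β))^2 - (2*s*z)*(z*(s/β)) + γ = (γ*β - s^2*z^2)/β := by
        field_simp; ring
      rw [expand, div_eq_zero_iff]
      left
      linear_combination (-(z^2))*hs - β*γ*hz2
    have h2 : 2*β*(z*t) - (μ-α) = 0 := by
      rw [hμα, htdef]; field_simp; ring
    obtain ⟨A, hAdef⟩ : ∃ x, x = w 0 := ⟨w 0, rfl⟩
    obtain ⟨B, hBdef⟩ : ∃ x, x = w 1/(z*t) - w 0 := ⟨_, rfl⟩
    have init0 : w 0 = (fun j => (A+B*(j:ℕ))*(z*t)^j) 0 := by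
      show w 0 = (A+B*((0:ℕ):ℂ))*(z*t)^0
      rw [hAdef]; push_cast; ring
    have init1 : w 1 = (fun j => (A+B*(j:ℕ))*(z*t)^j) 1 := by
      show w 1 = (A+B*((1:ℕ):ℂ))*(z*t)^1
      rw [hBdef, hAdef]; push_cast; field_simp; ring
    have hwg := seq_unique n α β γ μ hb w (fun j => (A+B*(j:ℕ))*(z*t)^j) hrec
      (fun j _ => by exact_mod_cast double_pow_rec α β γ μ (z*t) A B h1 h2 j)
      init0 init1
    have eq1 : A = (A+B)*(z*t) := by
      have h := hbnd0
      rw [init0, init1] at h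
      push_cast at h
      simpa using h
    have eq2 : (A+B*(n:ℂ)+B)*(z*t) = A+B*(n:ℂ) := by
      have e0 := hwg (n+1) (by omega)
      have e1 := hwg n (by omega)
      have h := hbnd1
      rw [e0, e1] at h
      push_cast at h
      rw [pow_succ] at h
      have hpow : (z*t)^n ≠ 0 := pow_ne_zero _ hzt
      have h' : (z*t)^n * ((A+B*(n:ℂ)+B)*(z*t)) = (z*t)^n * (A+B*(n:ℂ)) := by
        linear_combination h
      linear_combination mul_left_cancel₀ hpow h'
    have key : B*(n:ℂ)*(z*t - 1) = 0 := by linear_combination eq2 + eq1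
    have hleft : z*t = 1 → μ = α + β + γ := by
      intro hzt1
      have hβ : s*z = β := by
        rw [htdef] at hzt1
        field_simp at hzt1
        linear_combination hzt1
      have hγs : s*(γ - s*z) = 0 := by
        linear_combination (-z)*hs + (γ*z)*hβ + (-(s*γ))*hz2
      have hγ : γ = s*z := by
        rcases mul_eq_zero.mp hγs with h | h
        · exact absurd h hsz
        · linear_combination h
      rw [hμ, hzi]
      linear_combination hβ - hγ
    rcases mul_eq_zero.mp key with hBn | hzt1
    · have hB0 : B = 0 := by
        rcases mul_eq_zero.mp hBn with h | h
        · exact h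
        · exact absurd h hn0
      have hA' : A*(z*t - 1) = 0 := by linear_combination -eq1 - (z*t)*hB0
      rcases mul_eq_zero.mp hA' with hA0 | hzt1'
      · exact absurd (by rw [hwg j0 (by omega)]; simp [hA0, hB0]) hj03
      · exact Or.inl (hleft (by linear_combination hzt1'))
    · exact Or.inl (hleft (by linear_combination hzt1))
  · -- distinct roots
    set a := t*z with hadef
    set b := t*z⁻¹ with hbdef2
    have hab : a ≠ b := by
      intro h
      apply hz2
      have h2 : z = z⁻¹ := mul_left_cancel₀ ht h
      rw [sq]
      nth_rewrite 2 [h2]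
      exact hzz
    have hμα : μ - α = s*(z+z⁻¹) := by rw [hμ]; ring
    have h1 : β*a^2 - (μ-α)*a + γ = 0 := by
      rw [hμα]; exact root_quad β γ s z z⁻¹ hb hzz hs
    have h2 : β*b^2 - (μ-α)*b + γ = 0 := by
      rw [hμα, show s*(z+z⁻¹) = s*(z⁻¹+z) by ring]
      exact root_quad β γ s z⁻¹ z hb (by rw [mul_comm]; exact hzz) hs
    have habne : a - b ≠ 0 := sub_ne_zero.mpr hab
    obtain ⟨A, hAdef⟩ : ∃ x, x = (w 1 - w 0*b)/(a-b) := ⟨_, rfl⟩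
    obtain ⟨B, hBdef⟩ : ∃ x, x = w 0 - A := ⟨_, rfl⟩
    have init0 : w 0 = (fun j => A*a^j + B*b^j) 0 := by
      show w 0 = A*a^0 + B*b^0
      rw [hBdef]; simp
    have init1 : w 1 = (fun j => A*a^j + B*b^j) 1 := by
      show w 1 = A*a^1 + B*b^1
      rw [hBdef, hAdef]
      field_simp
      ring
    have hwf := seq_unique n α β γ μ hb w (fun j => A*a^j + B*b^j) hrec
      (fun j _ => two_pow_rec α β γ μ a b A B h1 h2 j)
      init0 init1
    have eq1 : A + B = A*a + B*b := by
      have h := hbnd0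
      rw [init0, init1] at h
      simpa using h
    have eq2 : A*a^n*(a-1) + B*b^n*(b-1) = 0 := by
      have e0 := hwf (n+1) (by omega)
      have e1 := hwf n (by omega)
      have h := hbnd1
      rw [e0, e1] at h
      simp only [pow_succ] at h
      linear_combination h
    have e3 : A*(a-1) + B*(b-1) = 0 := by linear_combination -eq1
    have key : A*(a-1)*(a^n - b^n) = 0 := by linear_combination eq2 - b^n * e3
    rcases mul_eq_zero.mp key with h | hpow
    · rcases mul_eq_zero.mp h with hA | ha1
      · have hBb : B*(b-1) = 0 := by linear_combination e3 - (a-1)*hA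
        rcases mul_eq_zero.mp hBb with hB | hb1'
        · exact absurd (by rw [hwf j0 (by omega)]; simp [hA, hB]) hj03
        · left
          have hb1'' : b = 1 := by linear_combination hb1'
          have hbt : β*t = s := by rw [htdef]; field_simp
          have hszi : s*z⁻¹ = β := by
            linear_combination (-z⁻¹)*hbt - β*hbdef2 + β*hb1'
          have hγs : s*(s - z⁻¹*γ) = 0 := by linear_combination hs - γ*hszi
          have hγ : γ = s*z := by
            rcases mul_eq_zero.mp hγs with h' | h'
            · exact absurd h' hsz
            · linear_combination (-z)*h' - γ*hzz
          rw [hμ]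
          linear_combination hszi - hγ
      · left
        have ha1' : a = 1 := by linear_combination ha1
        have hbt : β*t = s := by rw [htdef]; field_simp
        have hsza : s*z = β := by
          linear_combination (-z)*hbt - β*hadef + β*ha1
        have hγs : s*(s - z*γ) = 0 := by linear_combination hs - γ*hsza
        have hγ : γ = s*z⁻¹ := by
          rcases mul_eq_zero.mp hγs with h' | h'
          · exact absurd h' hsz
          · linear_combination (-z⁻¹)*h' - γ*(by rw [mul_comm] at hzz; exact hzz : z⁻¹*z = 1)
        rw [hμ]
        linear_combination hsza - hγ
    · -- a^n = b^n : z^(2n) = 1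
      right
      have htn : t^n ≠ 0 := pow_ne_zero _ ht
      have hzn2 : z^n = (z⁻¹)^n := by
        have h' : t^n * z^n = t^n * (z⁻¹)^n := by
          rw [hadef, hbdef2] at hpow
          rw [mul_pow, mul_pow] at hpow
          linear_combination hpow
        exact mul_left_cancel₀ htn h'
      have hzn : z^n * z^n = 1 := by
        rw [show z^n * z^n = z^n * (z⁻¹)^n by rw [← hzn2], ← mul_pow, hzz, one_pow]
      have hexp : Complex.exp ((n:ℂ)*(θ*I) + (n:ℂ)*(θ*I)) = 1 := by
        rw [Complex.exp_add, Complex.exp_nat_mul]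
        exact hzn
      rw [Complex.exp_eq_one_iff] at hexp
      obtain ⟨m, hm⟩ := hexp
      have hθm : θ = (m:ℂ)*(Real.pi:ℂ)/n := by
        have h2' : (θ*(n:ℂ) - (m:ℂ)*(Real.pi:ℂ))*(2*I) = 0 := by linear_combination hm
        rcases mul_eq_zero.mp h2' with h3 | h3
        · field_simp
          linear_combination h3
        · exact absurd h3 (mul_ne_zero two_ne_zero Complex.I_ne_zero)
      have hndvd : ¬ ((n:ℤ) ∣ m) := by
        rintro ⟨q, hq⟩
        apply hz2
        have hzexp : z^2 = Complex.exp (θ*I + θ*I) := by rw [Complex.exp_add, ← hzdef, sq]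
        have harg : θ*I + θ*I = (q:ℤ)*(2*(Real.pi:ℂ)*I) := by
          rw [hθm, hq]
          push_cast
          field_simp
          ring
        rw [hzexp, harg, Complex.exp_int_mul_two_pi_mul_I]
      have hnZ : (2:ℤ) ≤ (n:ℤ) := by exact_mod_cast hn
      set r := m % (2*(n:ℤ)) with hrdef
      set q := m / (2*(n:ℤ)) with hqdef
      have hr0 : 0 ≤ r := Int.emod_nonneg m (by omega)
      have hr2n : r < 2*(n:ℤ) := Int.emod_lt_of_pos m (by omega)
      have hmqr : m = 2*(n:ℤ)*q + r := (Int.mul_ediv_add_emod m (2*(n:ℤ))).symm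
      have hrne0 : r ≠ 0 := by
        intro h
        exact hndvd ⟨2*q, by rw [hmqr, h]; ring⟩
      have hrnen : r ≠ (n:ℤ) := by
        intro h
        exact hndvd ⟨2*q+1, by rw [hmqr, h]; ring⟩
      have hcosθr : Complex.cos θ = Complex.cos (((r.toNat:ℕ):ℂ)*(Real.pi:ℂ)/n) := by
        have hrc : ((r.toNat:ℕ):ℂ) = ((r:ℤ):ℂ) := by
          norm_cast
          exact Int.toNat_of_nonneg hr0
        have hsplit : (m:ℂ)*(Real.pi:ℂ)/n = ((r.toNat:ℕ):ℂ)*(Real.pi:ℂ)/n + (q:ℤ)*(2*(Real.pi:ℂ)) := by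
          rw [hrc]
          have hmC : ((m:ℤ):ℂ) = 2*(n:ℂ)*((q:ℤ):ℂ) + ((r:ℤ):ℂ) := by
            exact_mod_cast congrArg (Int.cast : ℤ → ℂ) hmqr
          field_simp
          linear_combination hmC
        rw [hθm, hsplit, Complex.cos_add_int_mul_two_pi]
      have hfinal : ∀ k : ℕ, Complex.cos θ = Complex.cos ((k:ℂ)*(Real.pi:ℂ)/n) →
          μ = α + 2*s*Complex.cos ((k:ℂ)*(Real.pi:ℂ)/n) := by
        intro k hk
        rw [← hk]
        linear_combination -hμcos
      rcases lt_or_gt_of_ne hrnen with hrlt | hrgt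
      · refine ⟨r.toNat, by omega, by omega, hfinal r.toNat hcosθr⟩
      · refine ⟨(2*(n:ℤ)-r).toNat, by omega, by omega, ?_⟩
        apply hfinal
        rw [hcosθr]
        have hkc : (((2*(n:ℤ)-r).toNat:ℕ):ℂ) = 2*(n:ℂ) - ((r:ℤ):ℂ) := by
          have h1' : (((2*(n:ℤ)-r).toNat:ℕ):ℤ) = 2*(n:ℤ)-r := Int.toNat_of_nonneg (by omega)
          have := congrArg (Int.cast : ℤ → ℂ) h1'
          push_cast at this ⊢
          linear_combination this
        have hrc : ((r.toNat:ℕ):ℂ) = ((r:ℤ):ℂ) := by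
          norm_cast
          exact Int.toNat_of_nonneg hr0
        have harg : (((2*(n:ℤ)-r).toNat:ℕ):ℂ)*(Real.pi:ℂ)/n
            = 2*(Real.pi:ℂ) - ((r.toNat:ℕ):ℂ)*(Real.pi:ℂ)/n := by
          rw [hkc, hrc]
          field_simp
        rw [harg, Complex.cos_two_pi_sub]


/-- The eigenvalues of the perturbed tridiagonal Toeplitz matrix are exactly
`α + 2√(βγ) cos(kπ/n)`, `k = 1, …, n-1`, together with `α + β + γ`. -/
theorem stmt2 (n : ℕ) (hn : 2 ≤ n) (α β γ s : ℂ) (hs : s ^ 2 = β * γ) :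
    spectrum ℂ (triRefl n α β γ) =
      insert (α + β + γ)
        (Set.range (fun k : Fin (n - 1) =>
          α + 2 * s * Complex.cos ((((k : ℕ) + 1 : ℕ) : ℂ) * (Real.pi : ℂ) / (n : ℂ)))) := by
  ext μ
  simp only [Set.mem_insert_iff, Set.mem_range]
  constructor
  · intro hμ
    by_cases hβ : β = 0
    · subst hβ
      have hs0 : s = 0 := by
        have : s^2 = 0 := by rw [hs]; ring
        exact pow_eq_zero_iff (n := 2) (by norm_num) |>.mp this
      rcases forward_beta0 n hn α γ μ hμ with h | h
      · left; rw [h]; ring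
      · right
        refine ⟨⟨0, by omega⟩, ?_⟩
        rw [hs0, h]; ring
    by_cases hγ : γ = 0
    · subst hγ
      have hs0 : s = 0 := by
        have : s^2 = 0 := by rw [hs]; ring
        exact pow_eq_zero_iff (n := 2) (by norm_num) |>.mp this
      rcases forward_gamma0 n hn α β μ hμ with h | h
      · left; rw [h]; ring
      · right
        refine ⟨⟨0, by omega⟩, ?_⟩
        rw [hs0, h]; ring
    rcases forward_main n hn α β γ s μ hs hβ hγ hμ with h | ⟨k, hk1, hk2, hk3⟩
    · left; exact h
    · right
      refine ⟨⟨k-1, by omega⟩, ?_⟩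
      have h4 : (((⟨k-1, by omega⟩ : Fin (n-1)) : ℕ) + 1 : ℕ) = k := by
        simp only [Fin.val_mk]
        omega
      rw [h4]
      exact hk3.symm
  · intro h
    rcases h with rfl | ⟨k, hk⟩
    · exact spec_abc n hn α β γ
    · rw [← hk]
      by_cases hsz : s = 0
      · have hval : α + 2*s*Complex.cos ((((k:ℕ)+1:ℕ):ℂ) * (Real.pi:ℂ) / n) = α := by
          rw [hsz]; ring
        rw [hval]
        have hbg : β*γ = 0 := by rw [← hs, hsz]; ring
        rcases mul_eq_zero.mp hbg with h' | h'
        · subst h'; exact spec_alpha_beta0 n hn α γ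
        · subst h'; exact spec_alpha_gamma0 n hn α β
      · exact backward_cos n hn α β γ s hs hsz ((k:ℕ)+1) (by omega)
          (by have := k.isLt; omega)
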